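/- Let K(ε) = [[A, ε Bᵀ], [ε B, 0]] be an invertible (n+m)×(n+m) real matrix with A invertible and B A^{-1} Bᵀ invertible, N = n+m, and let C_0 = |det A · det(B A^{-1} Bᵀ)|. Then the 2-norm condition number satisfies κ_2(K(ε)) ≥ (‖A‖₂ / C_0^{1/N}) · ε^{−2m/N} for all ε > 0. In particular κ_2(K(ε)) → ∞ as ε → 0⁺. -/

import Mathlib

open Matrix
open scoped Matrix.Norms.L2Operator

lemma abs_det_le_norm_pow {N : Type*} [Fintype N] [DecidableEq N]
    (M : Matrix N N ℝ) : |M.det| ≤ ‖M‖ ^ (Fintype.card N) := by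
  have hH : (Mᴴ * M).IsHermitian := isHermitian_conjTranspose_mul_self M
  have hev : ∀ i, hH.eigenvalues i ≤ ‖M‖ ^ 2 := by
    intro i
    have hv := hH.mulVec_eigenvectorBasis i
    have hnv : ‖hH.eigenvectorBasis i‖ = 1 := hH.eigenvectorBasis.orthonormal.1 i
    have h1 := Matrix.l2_opNorm_mulVec (Mᴴ * M) (hH.eigenvectorBasis i)
    have h2 : (EuclideanSpace.equiv N ℝ).symm ((Mᴴ * M) *ᵥ hH.eigenvectorBasis i)
        = hH.eigenvalues i • hH.eigenvectorBasis i := by rw [hv]; rfl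
    rw [h2, norm_smul, hnv, mul_one, Real.norm_eq_abs] at h1
    rw [mul_one] at h1
    calc hH.eigenvalues i ≤ |hH.eigenvalues i| := le_abs_self _
      _ ≤ ‖Mᴴ * M‖ := h1
      _ = ‖M‖ ^ 2 := by rw [Matrix.l2_opNorm_conjTranspose_mul_self]; ring
  have hnonneg : ∀ i, 0 ≤ hH.eigenvalues i := fun i =>
    (Matrix.posSemidef_conjTranspose_mul_self M).eigenvalues_nonneg i
  have hdet : M.det ^ 2 = ∏ i, hH.eigenvalues i := by
    have := hH.det_eq_prod_eigenvalues
    rw [Matrix.det_mul, Matrix.det_conjTranspose] at this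
    simpa [sq, star_trivial] using this
  have h2 : M.det ^ 2 ≤ (‖M‖ ^ Fintype.card N) ^ 2 := by
    rw [hdet]
    calc ∏ i, hH.eigenvalues i ≤ ∏ _i : N, ‖M‖ ^ 2 :=
        Finset.prod_le_prod (fun i _ => hnonneg i) (fun i _ => hev i)
      _ = (‖M‖ ^ Fintype.card N) ^ 2 := by
        rw [Finset.prod_const, Finset.card_univ]; ring
  calc |M.det| = Real.sqrt (M.det ^ 2) := (Real.sqrt_sq_eq_abs _).symm
    _ ≤ Real.sqrt ((‖M‖ ^ Fintype.card N) ^ 2) := Real.sqrt_le_sqrt h2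
    _ = ‖M‖ ^ Fintype.card N := Real.sqrt_sq (by positivity)

set_option maxHeartbeats 1000000 in
lemma norm_block_le {l n o p : Type*} [Fintype l] [Fintype n] [Fintype o] [Fintype p]
    [DecidableEq n] [DecidableEq p]
    (A : Matrix l n ℝ) (B : Matrix l p ℝ) (C : Matrix o n ℝ) (D : Matrix o p ℝ) :
    ‖A‖ ≤ ‖fromBlocks A B C D‖ := by
  rw [Matrix.l2_opNorm_def]
  refine ContinuousLinearMap.opNorm_le_bound _ (norm_nonneg _) fun x => ?_
  set y : EuclideanSpace ℝ (n ⊕ p) :=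
    (WithLp.equiv 2 _).symm (Sum.elim ((WithLp.equiv 2 _) x) 0) with hy_def
  have hy : ‖y‖ = ‖x‖ := by
    rw [EuclideanSpace.norm_eq, EuclideanSpace.norm_eq]
    congr 1
    rw [Fintype.sum_sum_type]
    simp [y]
  have hKy := Matrix.l2_opNorm_mulVec (fromBlocks A B C D) y
  rw [hy] at hKy
  refine le_trans ?_ hKy
  have hnorm1 : ‖((toEuclideanLin ≪≫ₗ LinearMap.toContinuousLinearMap) A) x‖
      = Real.sqrt (∑ i, ‖(A *ᵥ (WithLp.equiv 2 _ x)) i‖ ^ 2) := by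
    rw [EuclideanSpace.norm_eq]; rfl
  have hnorm2 : ‖(EuclideanSpace.equiv (l ⊕ o) ℝ).symm ((fromBlocks A B C D) *ᵥ y)‖
      = Real.sqrt (∑ i, ‖((fromBlocks A B C D) *ᵥ (WithLp.equiv 2 _ y)) i‖ ^ 2) := by
    rw [EuclideanSpace.norm_eq]; rfl
  rw [hnorm1, hnorm2]
  apply Real.sqrt_le_sqrt
  have hmv : (fromBlocks A B C D) *ᵥ (WithLp.equiv 2 _ y)
      = Sum.elim (A *ᵥ (WithLp.equiv 2 _ x) + B *ᵥ 0) (C *ᵥ (WithLp.equiv 2 _ x) + D *ᵥ 0) := by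
    have he : (WithLp.equiv 2 ((i : n ⊕ p) → ℝ)) y = Sum.elim ((WithLp.equiv 2 (n → ℝ)) x) 0 := by
      rw [hy_def]; exact Equiv.apply_symm_apply _ _
    rw [he, Matrix.fromBlocks_mulVec, Sum.elim_comp_inl, Sum.elim_comp_inr]
  rw [hmv, Fintype.sum_sum_type]
  simp only [Sum.elim_inl, Sum.elim_inr, Matrix.mulVec_zero, add_zero]
  exact le_add_of_nonneg_right (by positivity)

/-- Condition number lower bound for the saddle-point matrix `K(ε) = [[A, ε Bᵀ],[ε B, 0]]`:
with `A` and `B A⁻¹ Bᵀ` invertible, `N = n + m`, `C₀ = |det A * det (B A⁻¹ Bᵀ)|`,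
the 2-norm condition number `κ₂(K(ε)) = ‖K(ε)‖₂ ‖K(ε)⁻¹‖₂` satisfies
`κ₂(K(ε)) ≥ (‖A‖₂ / C₀^(1/N)) ε^(-2m/N)` for all `ε > 0`; in particular it tends to `∞`
as `ε → 0⁺`. -/
theorem saddle_point_condition_number (n m : ℕ) (hm : 0 < m)
    (A : Matrix (Fin n) (Fin n) ℝ) (B : Matrix (Fin m) (Fin n) ℝ)
    (hA : IsUnit A.det) (hS : IsUnit (B * A⁻¹ * Bᵀ).det)
    (K : ℝ → Matrix (Fin n ⊕ Fin m) (Fin n ⊕ Fin m) ℝ)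
    (hK : ∀ ε, K ε = Matrix.fromBlocks A (ε • Bᵀ) (ε • B) 0)
    (hKinv : ∀ ε > 0, IsUnit (K ε).det)
    (C₀ : ℝ) (hC₀ : C₀ = |A.det * (B * A⁻¹ * Bᵀ).det|) :
    (∀ ε > 0, ‖A‖ / C₀ ^ ((1 : ℝ) / (n + m)) * ε ^ (-(2 * (m : ℝ)) / (n + m)) ≤
      ‖K ε‖ * ‖(K ε)⁻¹‖) ∧
    Filter.Tendsto (fun ε => ‖K ε‖ * ‖(K ε)⁻¹‖)
      (nhdsWithin 0 (Set.Ioi 0)) Filter.atTop := by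
  have hn : 0 < n := by
    rcases Nat.eq_zero_or_pos n with h0 | h
    · subst h0
      have hz : B * A⁻¹ * Bᵀ = 0 := by
        ext i j; simp [Matrix.mul_apply]
      rw [hz, @Matrix.det_zero _ _ _ _ _ ⟨⟨0, hm⟩⟩] at hS
      simpa using hS
    · exact h
  have hdA : A.det ≠ 0 := by
    intro h; rw [h] at hA; simpa using hA
  have hdS : (B * A⁻¹ * Bᵀ).det ≠ 0 := by
    intro h; rw [h] at hS; simpa using hS
  have hC₀pos : 0 < C₀ := by
    rw [hC₀]; exact abs_pos.mpr (mul_ne_zero hdA hdS)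
  have hAnorm : 0 < ‖A‖ := by
    rw [norm_pos_iff]
    intro h
    rw [h, @Matrix.det_zero _ _ _ _ _ ⟨⟨0, hn⟩⟩] at hdA
    exact hdA rfl
  have hNpos : (0:ℝ) < (n:ℝ) + m := by positivity
  have hNne : ((n:ℝ) + m) ≠ 0 := ne_of_gt hNpos
  -- determinant of K ε
  have hdetK : ∀ ε : ℝ, 0 < ε → |(K ε).det| = ε ^ (2 * m) * C₀ := by
    intro ε hε
    have : Invertible A := A.invertibleOfIsUnitDet hA
    have h1 : (K ε).det = A.det * ((-(ε ^ 2)) ^ m * (B * A⁻¹ * Bᵀ).det) := by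
      rw [hK, Matrix.det_fromBlocks₁₁, Matrix.invOf_eq_nonsing_inv]
      congr 1
      have h2 : (0 : Matrix (Fin m) (Fin m) ℝ) - (ε • B) * A⁻¹ * (ε • Bᵀ)
          = (-(ε ^ 2)) • (B * A⁻¹ * Bᵀ) := by
        rw [zero_sub, Matrix.smul_mul, Matrix.smul_mul, Matrix.mul_smul, smul_smul, ← neg_smul]
        ring_nf
      rw [h2, Matrix.det_smul, Fintype.card_fin]
    rw [h1, hC₀, abs_mul, abs_mul, abs_mul, abs_pow, abs_neg, abs_pow, sq_abs,
      ← pow_mul]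
    ring
  -- lower bound on ‖(K ε)⁻¹‖
  have hR : ∀ ε : ℝ, 0 < ε →
      ((ε ^ (2 * m) * C₀)⁻¹) ^ ((1:ℝ) / ((n:ℝ) + m)) ≤ ‖(K ε)⁻¹‖ := by
    intro ε hε
    have h1 := abs_det_le_norm_pow ((K ε)⁻¹)
    rw [Matrix.det_nonsing_inv, Ring.inverse_eq_inv', abs_inv, hdetK ε hε] at h1
    have hcard : Fintype.card (Fin n ⊕ Fin m) = n + m := by simp
    rw [hcard] at h1
    have h2 : ((ε ^ (2 * m) * C₀)⁻¹) ^ ((1:ℝ) / ((n:ℝ) + m))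
        ≤ (‖(K ε)⁻¹‖ ^ (n + m)) ^ ((1:ℝ) / ((n:ℝ) + m)) :=
      Real.rpow_le_rpow (by positivity) h1 (by positivity)
    rwa [← Real.rpow_natCast ‖(K ε)⁻¹‖ (n + m), ← Real.rpow_mul (norm_nonneg _),
      Nat.cast_add, mul_one_div, div_self hNne, Real.rpow_one] at h2
  -- the key pointwise bound
  have key : ∀ ε : ℝ, 0 < ε →
      ‖A‖ / C₀ ^ ((1 : ℝ) / (n + m)) * ε ^ (-(2 * (m : ℝ)) / (n + m)) ≤
        ‖K ε‖ * ‖(K ε)⁻¹‖ := by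
    intro ε hε
    have hKA : ‖A‖ ≤ ‖K ε‖ := by rw [hK]; exact norm_block_le A (ε • Bᵀ) (ε • B) 0
    have heq : ‖A‖ / C₀ ^ ((1 : ℝ) / (n + m)) * ε ^ (-(2 * (m : ℝ)) / (n + m))
        = ‖A‖ * ((ε ^ (2 * m) * C₀)⁻¹) ^ ((1:ℝ) / ((n:ℝ) + m)) := by
      rw [mul_inv, Real.mul_rpow (by positivity) (by positivity),
        Real.inv_rpow (by positivity : (0:ℝ) ≤ ε ^ (2 * m)), Real.inv_rpow hC₀pos.le,
        ← Real.rpow_natCast ε (2 * m), ← Real.rpow_mul hε.le, ← Real.rpow_neg hε.le,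
        show -((((2 * m : ℕ)):ℝ) * (1 / ((n:ℝ) + m))) = -(2 * (m : ℝ)) / ((n:ℝ) + m) by
          push_cast; ring]
      ring
    rw [heq]
    calc ‖A‖ * ((ε ^ (2 * m) * C₀)⁻¹) ^ ((1:ℝ) / ((n:ℝ) + m))
        ≤ ‖A‖ * ‖(K ε)⁻¹‖ := by
          exact mul_le_mul_of_nonneg_left (hR ε hε) (norm_nonneg _)
      _ ≤ ‖K ε‖ * ‖(K ε)⁻¹‖ := mul_le_mul_of_nonneg_right hKA (norm_nonneg _)
  refine ⟨key, ?_⟩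
  -- tendsto part
  have hconst : 0 < ‖A‖ / C₀ ^ ((1 : ℝ) / ((n:ℝ) + m)) :=
    div_pos hAnorm (Real.rpow_pos_of_pos hC₀pos _)
  have hcneg : -(2 * (m : ℝ)) / ((n:ℝ) + m) < 0 := by
    apply div_neg_of_neg_of_pos _ hNpos
    have : (0:ℝ) < (m:ℝ) := by exact_mod_cast hm
    linarith
  have htend : Filter.Tendsto (fun ε : ℝ => ε ^ (-(2 * (m : ℝ)) / ((n:ℝ) + m)))
      (nhdsWithin 0 (Set.Ioi 0)) Filter.atTop := by
    have h1 : Filter.Tendsto (fun ε : ℝ => (ε⁻¹) ^ (2 * (m : ℝ) / ((n:ℝ) + m)))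
        (nhdsWithin 0 (Set.Ioi 0)) Filter.atTop :=
      (tendsto_rpow_atTop (by positivity)).comp tendsto_inv_nhdsGT_zero
    refine h1.congr' ?_
    filter_upwards [self_mem_nhdsWithin] with ε (hε : ε ∈ Set.Ioi 0)
    rw [← Real.rpow_neg_one ε, ← Real.rpow_mul (le_of_lt hε)]
    congr 1
    ring
  have htend2 : Filter.Tendsto
      (fun ε : ℝ => ‖A‖ / C₀ ^ ((1 : ℝ) / ((n:ℝ) + m)) * ε ^ (-(2 * (m : ℝ)) / ((n:ℝ) + m)))
      (nhdsWithin 0 (Set.Ioi 0)) Filter.atTop := htend.const_mul_atTop hconst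
  refine Filter.tendsto_atTop_mono' _ ?_ htend2
  filter_upwards [self_mem_nhdsWithin] with ε (hε : ε ∈ Set.Ioi 0)
  exact key ε hε
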